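/- For any partition α with at most n parts and any positive integer b, the product of the elementary symmetric polynomial e_b and the Schur polynomial s_α in n variables equals the sum of Schur polynomials s_β over all partitions β with at most n parts such that β contains α, |β| = |α| + b, and β/α is a vertical strip (i.e., β_i - α_i ∈ {0,1} for all i). -/

import Mathlib

open MvPolynomial

/-- Complete homogeneous symmetric polynomial in `n` variables, indexed by an
integer, with the convention `h_k = 0` for `k < 0` and `h_0 = 1`. -/
noncomputable def hInt (n : ℕ) (k : ℤ) : MvPolynomial (Fin n) ℤ :=
  if 0 ≤ k then hsymm (Fin n) ℤ k.toNat else 0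

/-- The Schur polynomial of `α` in `n` variables, defined via the
Jacobi–Trudi determinant `s_α = det (h_{α_i - i + j})_{i,j}`. -/
noncomputable def schur (n : ℕ) (α : Fin n → ℕ) : MvPolynomial (Fin n) ℤ :=
  Matrix.det (Matrix.of fun i j : Fin n => hInt n ((α i : ℤ) - (i : ℕ) + (j : ℕ)))

/-- A symmetric polynomial is Schur positive if it is a nonnegative integer
combination of Schur polynomials of partitions. -/
def SchurPositive (n : ℕ) (f : MvPolynomial (Fin n) ℤ) : Prop :=
  ∃ c : (Fin n → ℕ) →₀ ℕ, (∀ lam ∈ c.support, Antitone lam) ∧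
    f = c.sum fun lam k => (k : ℤ) • schur n lam

namespace PieriAux

variable (n : ℕ)

abbrev PR (n : ℕ) := MvPolynomial (Fin n) ℤ
noncomputable def geomG (i : Fin n) : PowerSeries (PR n) := PowerSeries.mk fun a => X i ^ a
noncomputable def hSer : PowerSeries (PR n) := PowerSeries.mk fun m => hsymm (Fin n) ℤ m

lemma sum_univ_toFinsupp {m : ℕ} (μ : Multiset (Fin n)) (hμ : Multiset.card μ = m) :
    Finset.univ.sum (Multiset.toFinsupp μ) = m := by
  have : Finset.univ.sum (Multiset.toFinsupp μ) = ∑ i, id ((Multiset.toFinsupp μ) i) := rfl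
  rw [this, ← Finsupp.sum_fintype _ _ (fun _ => rfl), ← Finsupp.card_toMultiset,
    Multiset.toFinsupp_toMultiset, hμ]

lemma hSer_eq_prod : hSer n = ∏ i : Fin n, geomG n i := by
  apply PowerSeries.ext; intro m
  rw [PowerSeries.coeff_prod, hSer, PowerSeries.coeff_mk, hsymm]
  refine Finset.sum_bij' (fun (s : Sym (Fin n) m) _ => Multiset.toFinsupp s.1)
    (fun (l : Fin n →₀ ℕ) hl => ⟨Finsupp.toMultiset l, ?_⟩) ?_ ?_ ?_ ?_ ?_
  · rcases Finset.mem_finsuppAntidiag.1 hl with ⟨h1, _⟩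
    rw [Finsupp.card_toMultiset, Finsupp.sum_fintype _ _ (fun _ => rfl)]
    exact h1
  · intro s _
    exact Finset.mem_finsuppAntidiag.2 ⟨sum_univ_toFinsupp n s.1 s.2, Finset.subset_univ _⟩
  · intro l _; exact Finset.mem_univ _
  · intro s _; exact Subtype.ext (Multiset.toFinsupp_toMultiset _)
  · intro l hl; simp
  · intro s _
    simp only [geomG, PowerSeries.coeff_mk]
    rw [Finset.prod_multiset_map_count]
    have h2 : ∀ x : Fin n, (X x : PR n) ^ (Multiset.toFinsupp s.1) x = X x ^ Multiset.count x s.1 := by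
      intro x; rw [Multiset.toFinsupp_apply]
    rw [Finset.prod_congr rfl fun x _ => h2 x]
    refine Finset.prod_subset (Finset.subset_univ _) fun x _ hx => ?_
    have hx' : x ∉ s.1 := by simpa using hx
    rw [Multiset.count_eq_zero_of_notMem hx', pow_zero]

noncomputable def eSer (j : Fin n) : PowerSeries (PR n) :=
  ∏ i ∈ Finset.univ.erase j, (1 - PowerSeries.C (X i : PR n) * PowerSeries.X)

lemma one_sub_mul_geomG (i : Fin n) :
    (1 - PowerSeries.C (X i : PR n) * PowerSeries.X) * geomG n i = 1 := by
  apply PowerSeries.ext; intro d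
  rw [sub_mul, one_mul, map_sub, mul_assoc]
  cases d with
  | zero => simp [geomG, PowerSeries.coeff_zero_X_mul]
  | succ m =>
    rw [PowerSeries.coeff_C_mul, PowerSeries.coeff_succ_X_mul]
    simp [geomG, pow_succ, mul_comm]

lemma eSer_mul_hSer (j : Fin n) : eSer n j * hSer n = geomG n j := by
  rw [hSer_eq_prod, ← Finset.mul_prod_erase _ _ (Finset.mem_univ j), eSer,
    mul_comm (geomG n j), ← mul_assoc, ← Finset.prod_mul_distrib]
  rw [Finset.prod_congr rfl fun i _ => one_sub_mul_geomG n i, Finset.prod_const_one, one_mul]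

lemma coeff_eSer_eq_zero (j : Fin n) {r : ℕ} (hr : n ≤ r) :
    PowerSeries.coeff r (eSer n j) = 0 := by
  rw [eSer, PowerSeries.coeff_prod]
  refine Finset.sum_eq_zero fun l hl => ?_
  rcases Finset.mem_finsuppAntidiag.1 hl with ⟨h1, h2⟩
  by_cases hbig : ∃ i ∈ Finset.univ.erase j, 2 ≤ l i
  · rcases hbig with ⟨i, hi, h2i⟩
    refine Finset.prod_eq_zero hi ?_
    rw [map_sub, PowerSeries.coeff_C_mul, PowerSeries.coeff_X, PowerSeries.coeff_one,
      if_neg (by omega : ¬ l i = 0), if_neg (by omega : ¬ l i = 1), mul_zero, sub_zero]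
  · push_neg at hbig
    exfalso
    have hcard : (Finset.univ.erase j).card = n - 1 := by
      rw [Finset.card_erase_of_mem (Finset.mem_univ j), Finset.card_univ, Fintype.card_fin]
    have : r ≤ (Finset.univ.erase j).card := by
      calc r = ∑ i ∈ Finset.univ.erase j, l i := h1.symm
        _ ≤ ∑ _i ∈ Finset.univ.erase j, 1 := Finset.sum_le_sum fun i hi => by
            have := hbig i hi; omega
        _ = (Finset.univ.erase j).card := by simp
    have hn : 0 < n := j.pos
    omega

lemma keyJ (j : Fin n) (m : ℕ) :
    ∑ r ∈ Finset.range n, PowerSeries.coeff r (eSer n j) * hInt n ((m : ℤ) - r)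
      = X j ^ m := by
  have h0 := congrArg (PowerSeries.coeff m) (eSer_mul_hSer n j)
  rw [PowerSeries.coeff_mul, Finset.Nat.sum_antidiagonal_eq_sum_range_succ_mk] at h0
  simp only [geomG, PowerSeries.coeff_mk, hSer] at h0
  rw [← h0]
  set M := max (m + 1) n with hM
  have hleft : ∑ r ∈ Finset.range n, PowerSeries.coeff r (eSer n j) * hInt n ((m : ℤ) - r)
      = ∑ r ∈ Finset.range M, PowerSeries.coeff r (eSer n j) * hInt n ((m : ℤ) - r) := by
    refine Finset.sum_subset (Finset.range_subset_range.2 (le_max_right _ _)) fun r _ hr => ?_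
    rw [Finset.mem_range, not_lt] at hr
    rw [coeff_eSer_eq_zero n j hr, zero_mul]
  have hright : ∑ r ∈ Finset.range (m + 1),
        PowerSeries.coeff r (eSer n j) * hsymm (Fin n) ℤ (m - r)
      = ∑ r ∈ Finset.range M, PowerSeries.coeff r (eSer n j) * hInt n ((m : ℤ) - r) := by
    rw [Finset.sum_congr rfl (fun r hr => ?_)]
    · refine Finset.sum_subset (Finset.range_subset_range.2 (le_max_left _ _)) fun r _ hr => ?_
      rw [Finset.mem_range, not_lt] at hr
      rw [hInt, if_neg (by omega), mul_zero]
    · rw [Finset.mem_range] at hr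
      rw [hInt, if_pos (by omega)]
      congr 2
      omega
  rw [hleft, hright]

noncomputable def Hmat (β : Fin n → ℕ) : Matrix (Fin n) (Fin n) (PR n) :=
  Matrix.of fun i k : Fin n => hInt n ((β i : ℤ) - (i : ℕ) + (k : ℕ))

noncomputable def Emat : Matrix (Fin n) (Fin n) (PR n) :=
  Matrix.of fun k j : Fin n => PowerSeries.coeff (n - 1 - (k : ℕ)) (eSer n j)

noncomputable def Vmat (β : Fin n → ℕ) : Matrix (Fin n) (Fin n) (PR n) :=
  Matrix.of fun i j : Fin n => X j ^ (β i + (n - 1 - (i : ℕ)))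

lemma Hmat_mul_Emat (β : Fin n → ℕ) : Hmat n β * Emat n = Vmat n β := by
  apply Matrix.ext; intro i j
  rw [Matrix.mul_apply]
  have key := keyJ n j (β i + (n - 1 - (i : ℕ)))
  rw [← Finset.sum_range_reflect] at key
  show _ = X j ^ (β i + (n - 1 - (i : ℕ)))
  rw [← key]
  have hi : (i : ℕ) < n := i.isLt
  calc ∑ k : Fin n, Hmat n β i k * Emat n k j
      = ∑ k ∈ Finset.range n,
          hInt n ((β i : ℤ) - (i : ℕ) + (k : ℕ)) *
            PowerSeries.coeff (n - 1 - k) (eSer n j) :=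
        Fin.sum_univ_eq_sum_range
          (fun k => hInt n ((β i : ℤ) - (i : ℕ) + k) *
            PowerSeries.coeff (n - 1 - k) (eSer n j)) n
    _ = _ := by
        refine Finset.sum_congr rfl fun r hr => ?_
        rw [Finset.mem_range] at hr
        rw [mul_comm]
        congr 2
        omega

lemma det_Hmat_zero : (Hmat n fun _ => 0).det = 1 := by
  rw [Matrix.det_of_upperTriangular]
  · refine Finset.prod_eq_one fun i _ => ?_
    show hInt n ((0 : ℕ) - (i : ℕ) + (i : ℕ)) = 1
    rw [show ((0 : ℕ) : ℤ) - (i : ℕ) + (i : ℕ) = 0 by ring, hInt, if_pos le_rfl]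
    simp [hsymm_zero]
  · intro i j hij
    show hInt n ((0 : ℕ) - (i : ℕ) + (j : ℕ)) = 0
    rw [hInt, if_neg]
    have : (j : ℕ) < (i : ℕ) := hij
    omega

lemma det_Emat_ne_zero : (Emat n).det ≠ 0 := by
  have h1 : (Emat n).det = (Vmat n fun _ => 0).det := by
    have := congrArg Matrix.det (Hmat_mul_Emat n fun _ => 0)
    rwa [Matrix.det_mul, det_Hmat_zero, one_mul] at this
  rw [h1]
  have h2 : (Vmat n fun _ => 0) =
      ((Matrix.vandermonde (fun j : Fin n => (X j : PR n))).transpose).submatrix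
        (Fin.revPerm : Equiv.Perm (Fin n)) id := by
    apply Matrix.ext; intro i j
    show (X j : PR n) ^ (0 + (n - 1 - (i : ℕ))) = X j ^ ((Fin.rev i : Fin n) : ℕ)
    rw [Fin.val_rev, zero_add]
    congr 1
    omega
  rw [h2, Matrix.det_permute, Matrix.det_transpose, Matrix.det_vandermonde]
  apply mul_ne_zero
  · rcases Int.units_eq_one_or (Equiv.Perm.sign (Fin.revPerm : Equiv.Perm (Fin n))) with h | h
      <;> rw [h] <;> simp
  · rw [Finset.prod_ne_zero_iff]
    intro i _
    rw [Finset.prod_ne_zero_iff]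
    intro j hj
    rw [Finset.mem_Ioi] at hj
    rw [sub_ne_zero]
    exact fun hX => absurd (X_injective hX) (Fin.ne_of_gt hj)

lemma prod_inner (b : ℕ) (α : Fin n → ℕ) (σ : Equiv.Perm (Fin n)) (T : Finset (Fin n)) :
    ∏ i : Fin n, ((if i ∈ T then (X i : PR n) else 1) * X i ^ (α (σ i) + (n - 1 - (σ i : ℕ))))
      = ∏ i : Fin n, (X i : PR n) ^
          (α (σ i) + (if σ i ∈ T.map σ.toEmbedding then 1 else 0) + (n - 1 - (σ i : ℕ))) := by
  refine Finset.prod_congr rfl fun i _ => ?_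
  simp only [Finset.mem_map_equiv, Equiv.symm_apply_apply]
  by_cases hiT : i ∈ T
  · simp only [if_pos hiT]
    rw [pow_add, pow_add, pow_add, pow_one]
    ring
  · simp only [if_neg hiT, one_mul, add_zero]

lemma esymm_mul_det_Vmat (b : ℕ) (α : Fin n → ℕ) :
    esymm (Fin n) ℤ b * (Vmat n α).det =
    ∑ S ∈ Finset.powersetCard b Finset.univ,
      (Vmat n (fun i => α i + if i ∈ S then 1 else 0)).det := by
  rw [esymm, Finset.sum_mul]
  calc ∑ T ∈ Finset.powersetCard b Finset.univ, (∏ i ∈ T, (X i : PR n)) * (Vmat n α).det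
      = ∑ T ∈ Finset.powersetCard b Finset.univ,
          (Matrix.of fun i j => (if j ∈ T then (X j : PR n) else 1) * Vmat n α i j).det := by
        refine Finset.sum_congr rfl fun T _ => ?_
        rw [Matrix.det_mul_row]
        congr 1
        rw [Finset.prod_ite_mem, Finset.univ_inter]
    _ = ∑ T ∈ Finset.powersetCard b Finset.univ, ∑ σ : Equiv.Perm (Fin n),
          Equiv.Perm.sign σ • ∏ i, (if i ∈ T then (X i : PR n) else 1) * Vmat n α (σ i) i :=
        Finset.sum_congr rfl fun T _ => Matrix.det_apply _
    _ = ∑ σ : Equiv.Perm (Fin n), ∑ T ∈ Finset.powersetCard b Finset.univ,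
          Equiv.Perm.sign σ • ∏ i, (if i ∈ T then (X i : PR n) else 1) * Vmat n α (σ i) i :=
        Finset.sum_comm
    _ = ∑ σ : Equiv.Perm (Fin n), ∑ S ∈ Finset.powersetCard b Finset.univ,
          Equiv.Perm.sign σ • ∏ i, Vmat n (fun p => α p + if p ∈ S then 1 else 0) (σ i) i := by
        refine Finset.sum_congr rfl fun σ _ => ?_
        refine Finset.sum_nbij' (fun T => T.map σ.toEmbedding)
          (fun S => S.map σ.symm.toEmbedding) ?_ ?_ ?_ ?_ ?_
        · intro T hT
          rw [Finset.mem_powersetCard_univ, Finset.card_map,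
            Finset.mem_powersetCard_univ.1 hT]
        · intro S hS
          rw [Finset.mem_powersetCard_univ, Finset.card_map,
            Finset.mem_powersetCard_univ.1 hS]
        · intro T _; ext x; simp
        · intro S _; ext x; simp
        · intro T _
          refine congrArg (Equiv.Perm.sign σ • ·) ?_
          exact prod_inner n b α σ T
    _ = ∑ S ∈ Finset.powersetCard b Finset.univ, ∑ σ : Equiv.Perm (Fin n),
          Equiv.Perm.sign σ • ∏ i, Vmat n (fun p => α p + if p ∈ S then 1 else 0) (σ i) i :=
        Finset.sum_comm
    _ = _ := Finset.sum_congr rfl fun S _ => (Matrix.det_apply _).symm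

lemma pieri_core (b : ℕ) (α : Fin n → ℕ) :
    esymm (Fin n) ℤ b * schur n α =
    ∑ S ∈ Finset.powersetCard b Finset.univ,
      schur n (fun i => α i + if i ∈ S then 1 else 0) := by
  have hdet : ∀ β : Fin n → ℕ, schur n β * (Emat n).det = (Vmat n β).det := by
    intro β
    rw [show schur n β = (Hmat n β).det from rfl, ← Matrix.det_mul, Hmat_mul_Emat]
  apply mul_right_cancel₀ (det_Emat_ne_zero n)
  rw [mul_assoc, hdet, esymm_mul_det_Vmat n b α, Finset.sum_mul]
  exact Finset.sum_congr rfl fun S _ => (hdet _).symm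

lemma schurP_eq_zero_of_succ (β : Fin n → ℕ) (k : ℕ) (hk : k + 1 < n)
    (hβ : β ⟨k + 1, hk⟩ = β ⟨k, by omega⟩ + 1) : schur n β = 0 := by
  apply Matrix.det_zero_of_row_eq (i := (⟨k, by omega⟩ : Fin n)) (j := ⟨k + 1, hk⟩)
  · exact fun h => by simpa using congrArg Fin.val h
  · funext c
    show hInt n _ = hInt n _
    congr 1
    rw [hβ]
    push_cast
    ring

lemma antitone_of_succ {N : ℕ} (f : Fin N → ℕ)
    (hc : ∀ k (hk : k + 1 < N), f ⟨k + 1, hk⟩ ≤ f ⟨k, by omega⟩) :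
    ∀ i j : Fin N, i ≤ j → f j ≤ f i := by
  cases N with
  | zero => exact fun i => i.elim0
  | succ m =>
    have hA : Antitone f := by
      rw [Fin.antitone_iff_succ_le]
      intro i
      have h1 : (i : ℕ) + 1 < m + 1 := by omega
      have h2 := hc (i : ℕ) h1
      have he : (⟨(i : ℕ) + 1, h1⟩ : Fin (m + 1)) = i.succ := rfl
      have he2 : (⟨(i : ℕ), by omega⟩ : Fin (m + 1)) = i.castSucc := rfl
      rw [he, he2] at h2
      exact h2
    exact fun i j hij => hA hij

/-- if values not antitone, there is an ascent at consecutive positions -/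
lemma exists_succ_ascent (f : Fin n → ℕ)
    (h : ¬ ∀ i j : Fin n, i ≤ j → f j ≤ f i) :
    ∃ k : ℕ, ∃ hk : k + 1 < n, f ⟨k, by omega⟩ < f ⟨k + 1, hk⟩ := by
  by_contra hc
  push_neg at hc
  exact h (antitone_of_succ f fun k hk => hc k hk)

def bS (n : ℕ) (α : Fin n → ℕ) (S : Finset (Fin n)) (i : Fin n) : ℕ :=
  α i + if i ∈ S then 1 else 0

theorem pieri_rule_esymm_aux (b : ℕ) (hb : 0 < b) (α : Fin n → ℕ) (hα : Antitone α) :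
    esymm (Fin n) ℤ b * schur n α =
    ∑ β ∈ Finset.univ.filter
        (fun β : Fin n → Fin ((∑ i, α i) + b + 1) =>
          (∀ i j : Fin n, i ≤ j → (β j : ℕ) ≤ (β i : ℕ)) ∧
          (∀ i : Fin n, α i ≤ (β i : ℕ) ∧ (β i : ℕ) ≤ α i + 1) ∧
          (∑ i, (β i : ℕ)) = (∑ i, α i) + b),
      schur n (fun i => (β i : ℕ)) := by
  classical
  rw [pieri_core n b α]
  have hrep : (∑ S ∈ Finset.powersetCard b Finset.univ,
        schur n (fun i => α i + if i ∈ S then 1 else 0))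
      = ∑ S ∈ Finset.powersetCard b Finset.univ, schur n (bS n α S) := rfl
  rw [hrep]
  have hsum_ite : ∀ S : Finset (Fin n), (∑ i, bS n α S i) = (∑ i, α i) + S.card := by
    intro S
    simp only [bS]
    rw [Finset.sum_add_distrib, Finset.sum_ite_mem, Finset.univ_inter]
    simp
  -- split off non-antitone terms
  have hsplit : ∑ S ∈ Finset.powersetCard b Finset.univ, schur n (bS n α S)
      = ∑ S ∈ (Finset.powersetCard b Finset.univ).filter
          (fun S => ∀ i j : Fin n, i ≤ j → bS n α S j ≤ bS n α S i), schur n (bS n α S) := by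
    rw [← Finset.sum_filter_add_sum_filter_not (Finset.powersetCard b Finset.univ)
      (fun S => ∀ i j : Fin n, i ≤ j → bS n α S j ≤ bS n α S i) (fun S => schur n (bS n α S))]
    have hzero : ∑ S ∈ (Finset.powersetCard b Finset.univ).filter
        (fun S => ¬ ∀ i j : Fin n, i ≤ j → bS n α S j ≤ bS n α S i), schur n (bS n α S) = 0 := by
      refine Finset.sum_eq_zero fun S hS => ?_
      rw [Finset.mem_filter] at hS
      obtain ⟨k, hk, hasc⟩ := exists_succ_ascent n (bS n α S) hS.2
      refine schurP_eq_zero_of_succ n (bS n α S) k hk ?_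
      have hle : (⟨k, by omega⟩ : Fin n) ≤ ⟨k + 1, hk⟩ := Fin.mk_le_mk.mpr (by omega)
      have h1 := hα hle
      simp only [bS] at hasc ⊢
      split_ifs at hasc ⊢ <;> omega
    rw [hzero, add_zero]
  rw [hsplit]
  have hbound : ∀ (S : Finset (Fin n)) (i : Fin n), bS n α S i < (∑ i, α i) + b + 1 := by
    intro S i
    have h1 : α i ≤ ∑ i, α i :=
      Finset.single_le_sum (f := α) (fun _ _ => Nat.zero_le _) (Finset.mem_univ i)
    have : bS n α S i ≤ α i + 1 := by simp only [bS]; split_ifs <;> omega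
    omega
  -- the bijection
  refine Finset.sum_bij' (i := fun S _ => fun i : Fin n =>
      (⟨bS n α S i, hbound S i⟩ : Fin ((∑ i, α i) + b + 1)))
    (j := fun β _ => Finset.univ.filter (fun i => (β i : ℕ) = α i + 1)) ?_ ?_ ?_ ?_ ?_
  · -- membership forward
    intro S hS
    rw [Finset.mem_filter] at hS ⊢
    obtain ⟨hScard, hgood⟩ := hS
    rw [Finset.mem_powersetCard_univ] at hScard
    refine ⟨Finset.mem_univ _, fun i j hij => hgood i j hij, fun i => ?_, ?_⟩
    · constructor
      · show α i ≤ bS n α S i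
        simp only [bS]; omega
      · show bS n α S i ≤ α i + 1
        simp only [bS]; split_ifs <;> omega
    · show (∑ i, bS n α S i) = (∑ i, α i) + b
      rw [hsum_ite, hScard]
  · -- membership backward
    intro β hβ
    rw [Finset.mem_filter] at hβ
    obtain ⟨-, hgood, hbounds, hsum⟩ := hβ
    rw [Finset.mem_filter]
    have hperterm : ∀ i : Fin n, bS n α (Finset.univ.filter (fun i => (β i : ℕ) = α i + 1)) i
        = (β i : ℕ) := by
      intro i
      simp only [bS, Finset.mem_filter, Finset.mem_univ, true_and]
      have := hbounds i
      split_ifs <;> omega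
    constructor
    · rw [Finset.mem_powersetCard_univ]
      have h1 := hsum_ite (Finset.univ.filter (fun i => (β i : ℕ) = α i + 1))
      have h2 : ∑ i, bS n α (Finset.univ.filter (fun i => (β i : ℕ) = α i + 1)) i
          = ∑ i, (β i : ℕ) := Finset.sum_congr rfl (fun i _ => hperterm i)
      exact Nat.add_left_cancel (h1.symm.trans (h2.trans hsum))
    · intro i j hij
      rw [hperterm, hperterm]
      exact hgood i j hij
  · -- left inverse
    intro S hS
    rw [Finset.mem_filter] at hS
    ext x
    simp only [Finset.mem_filter_univ, Finset.mem_filter, Finset.mem_univ, true_and, bS]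
    by_cases hx : x ∈ S
    · simp [hx]
    · simp [hx]
  · -- right inverse
    intro β hβ
    rw [Finset.mem_filter] at hβ
    obtain ⟨-, -, hbounds, -⟩ := hβ
    funext i
    apply Fin.ext
    show bS n α (Finset.univ.filter (fun i => (β i : ℕ) = α i + 1)) i = (β i : ℕ)
    simp only [bS, Finset.mem_filter, Finset.mem_univ, true_and]
    have := hbounds i
    split_ifs <;> omega
  · -- values
    intro S hS
    rfl

end PieriAux

/-- Pieri's rule: `e_b · s_α = Σ_β s_β`, the sum over partitions `β ⊇ α` with
`|β| = |α| + b` such that `β/α` is a vertical strip. -/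
theorem pieri_rule_esymm (n b : ℕ) (hb : 0 < b) (α : Fin n → ℕ) (hα : Antitone α) :
    esymm (Fin n) ℤ b * schur n α =
    ∑ β ∈ Finset.univ.filter
        (fun β : Fin n → Fin ((∑ i, α i) + b + 1) =>
          (∀ i j : Fin n, i ≤ j → (β j : ℕ) ≤ (β i : ℕ)) ∧
          (∀ i : Fin n, α i ≤ (β i : ℕ) ∧ (β i : ℕ) ≤ α i + 1) ∧
          (∑ i, (β i : ℕ)) = (∑ i, α i) + b),
      schur n (fun i => (β i : ℕ)) := by
  exact PieriAux.pieri_rule_esymm_aux n b hb α hα
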